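/- Let A be a quasi-hereditary finite-type abelian category, X an object, s the ⪯-maximal element of S such that Hom(M(s), X) ≠ 0 (assuming X ≠ 0 lies in A_{⪯s}), X_s the image of the evaluation map Hom(M(s),X) ⊗ M(s) → X, and X' = X/X_s. Then Hom(X', N(r)) ≅ Hom(X, N(r)) for all r ≠ s, and Hom(X', N(s)) = 0. -/

import Mathlib

open CategoryTheory CategoryTheory.Limits

attribute [local instance] CategoryTheory.Limits.HasFiniteBiproducts.of_hasFiniteProducts

universe v u

namespace StmtAux

variable {A : Type u} [Category.{v} A] [Abelian A]

/-- `CompFactors X l` asserts that `l` is a list of composition factors for `X`. -/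
inductive CompFactors : A → List A → Prop
  | nil {X : A} (h : IsZero X) : CompFactors X []
  | cons {X Y L : A} {l : List A} (hL : Simple L) (i : Y ⟶ X) (p : X ⟶ L)
      (w : i ≫ p = 0) (hse : (ShortComplex.mk i p w).ShortExact)
      (h : CompFactors Y l) : CompFactors X (L :: l)

open Classical in
/-- The multiplicity `[l : L]` : the number of members of `l` isomorphic to `L`. -/
noncomputable def mult (L : A) (l : List A) : ℕ :=
  l.countP (fun M => decide (Nonempty (M ≅ L)))

end StmtAux

open StmtAux

namespace StmtAux

variable {A : Type u} [Category.{v} A] [Abelian A] {S : Type*} [LinearOrder S]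

/-- `X` belongs to the Serre subcategory `A_{⪯ s}` generated by the simple
objects `L t` for `t ⪯ s`: all composition factors of `X` are of this form. -/
def InSub (L : S → A) (s : S) (X : A) : Prop :=
  ∃ l : List A, CompFactors X l ∧ ∀ M ∈ l, ∃ t : S, t ≤ s ∧ Nonempty (M ≅ L t)

/-- The data of standard covers `M s` and costandard hulls `N s` for the family
of simple objects `L s`, `s ∈ S`:  `M s` is a projective cover of `L s` within
the Serre subcategory `A_{⪯ s}` with `[M s : L s] = 1`, and `N s` is an injective
hull of `L s` within `A_{⪯ s}` with `[N s : L s] = 1`.  A category admitting such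
data is quasi-hereditary. -/
structure QHData (L : S → A) where
  M : S → A
  N : S → A
  φ : ∀ s : S, M s ⟶ L s
  ψ : ∀ s : S, L s ⟶ N s
  M_mem : ∀ s : S, InSub L s (M s)
  N_mem : ∀ s : S, InSub L s (N s)
  φ_epi : ∀ s : S, Epi (φ s)
  ψ_mono : ∀ s : S, Mono (ψ s)
  M_proj : ∀ (s : S) (X Y : A), InSub L s X → InSub L s Y →
      ∀ (p : X ⟶ Y), Epi p → ∀ f : M s ⟶ Y, ∃ g : M s ⟶ X, g ≫ p = f
  N_inj : ∀ (s : S) (X Y : A), InSub L s X → InSub L s Y →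
      ∀ (i : X ⟶ Y), Mono i → ∀ f : X ⟶ N s, ∃ g : Y ⟶ N s, i ≫ g = f
  φ_ess : ∀ (s : S) (Z : A) (g : Z ⟶ M s), Epi (g ≫ φ s) → Epi g
  ψ_ess : ∀ (s : S) (Z : A) (g : N s ⟶ Z), Mono (ψ s ≫ g) → Mono g
  M_mult : ∀ (s : S) (l : List A), CompFactors (M s) l → mult (L s) l = 1
  N_mult : ∀ (s : S) (l : List A), CompFactors (N s) l → mult (L s) l = 1

end StmtAux

namespace StmtAux

variable {A : Type u} [Category.{v} A] [Abelian A]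

/-- any nonzero quotient of a module with simple top maps onto the top -/
theorem top_lemma {L₀ M Q : A} (φ : M ⟶ L₀) [Simple L₀] (hφ : Epi φ)
    (ess : ∀ (Z : A) (g : Z ⟶ M), Epi (g ≫ φ) → Epi g)
    (π : M ⟶ Q) [Epi π] (hQ : ¬ IsZero Q) :
    ∃ v : Q ⟶ L₀, π ≫ v = φ ∧ Epi v := by
  haveI := hφ
  have hne : ¬ Epi (kernel.ι π ≫ φ) := by
    intro hepi
    have hek : Epi (kernel.ι π) := ess _ _ hepi
    haveI := hek
    haveI : IsIso (kernel.ι π) := isIso_of_mono_of_epi _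
    have : π = 0 := by
      have := kernel.condition π
      rw [← cancel_epi (kernel.ι π), comp_zero]
      exact this
    exact hQ (IsZero.of_epi_eq_zero π this)
  have h0 : kernel.ι π ≫ φ = 0 := by
    by_contra h0
    exact hne (epi_of_nonzero_to_simple h0)
  refine ⟨Abelian.epiDesc π φ h0, Abelian.comp_epiDesc π φ h0, ?_⟩
  have := Abelian.comp_epiDesc π φ h0
  exact epi_of_epi_fac this

/-- any nonzero image inside a module with simple socle contains the socle -/
theorem socle_lemma {L₀ N X : A} (ψ : L₀ ⟶ N) [Simple L₀] (hψ : Mono ψ)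
    (ess : ∀ (Z : A) (g : N ⟶ Z), Mono (ψ ≫ g) → Mono g)
    (h : X ⟶ N) (hh : h ≠ 0) :
    ∃ u : L₀ ⟶ image h, u ≫ image.ι h = ψ := by
  haveI := hψ
  have hnm : ¬ Mono (ψ ≫ cokernel.π (image.ι h)) := by
    intro hm
    have := ess _ _ hm
    haveI := this
    haveI : IsIso (cokernel.π (image.ι h)) := isIso_of_mono_of_epi _
    have hι : image.ι h = 0 := by
      have := cokernel.condition (image.ι h)
      rw [← cancel_mono (cokernel.π (image.ι h)), zero_comp]
      exact this
    apply hh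
    rw [← image.fac h, hι, comp_zero]
  have h0 : ψ ≫ cokernel.π (image.ι h) = 0 := by
    by_contra h0
    exact hnm (mono_of_nonzero_from_simple h0)
  exact ⟨Abelian.monoLift (image.ι h) ψ h0, Abelian.monoLift_comp _ _ _⟩

/-- a simple epimorphic image appears in any composition factor list -/
theorem exists_iso_of_epi {X : A} {l : List A} (h : CompFactors X l) :
    ∀ {L₀ : A}, Simple L₀ → ∀ (q : X ⟶ L₀), Epi q → ∃ M ∈ l, Nonempty (M ≅ L₀) := by
  induction h with
  | nil hz =>
      intro L₀ hL₀ q hq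
      haveI := hq
      exact absurd (IsZero.of_epi q hz) (Simple.not_isZero L₀)
  | @cons X Y L l hL i p w hse h ih =>
      intro L₀ hL₀ q hq
      haveI := hL₀
      haveI := hL
      haveI := hse.mono_f
      haveI := hse.epi_g
      by_cases hz : i ≫ q = 0
      · obtain ⟨u, hu⟩ : ∃ u : L ⟶ L₀, p ≫ u = q := by
          obtain ⟨u, hu⟩ := CokernelCofork.IsColimit.desc' hse.exact.gIsCokernel q hz
          exact ⟨u, hu⟩
        have hune : u ≠ 0 := by
          intro h0
          rw [h0, comp_zero] at hu
          haveI := hq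
          exact Simple.not_isZero L₀ (IsZero.of_epi_eq_zero q hu.symm)
        haveI : Mono u := mono_of_nonzero_from_simple hune
        haveI : Epi u := by
          rw [← hu] at hq
          exact epi_of_epi p u
        haveI : IsIso u := isIso_of_mono_of_epi u
        exact ⟨_, List.mem_cons_self, ⟨asIso u⟩⟩
      · have : Epi (i ≫ q) := epi_of_nonzero_to_simple hz
        obtain ⟨M, hM, hiso⟩ := ih hL₀ (i ≫ q) this
        exact ⟨M, List.mem_cons_of_mem _ hM, hiso⟩

/-- a simple subobject appears in any composition factor list -/
theorem exists_iso_of_mono {X : A} {l : List A} (h : CompFactors X l) :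
    ∀ {L₀ : A}, Simple L₀ → ∀ (j : L₀ ⟶ X), Mono j → ∃ M ∈ l, Nonempty (M ≅ L₀) := by
  induction h with
  | nil hz =>
      intro L₀ hL₀ j hj
      haveI := hj
      exact absurd (IsZero.of_mono j hz) (Simple.not_isZero L₀)
  | @cons X Y L l hL i p w hse h ih =>
      intro L₀ hL₀ j hj
      haveI := hL₀
      haveI := hL
      haveI := hse.mono_f
      haveI := hse.epi_g
      by_cases hz : j ≫ p = 0
      · obtain ⟨j', hj'⟩ : ∃ j' : L₀ ⟶ Y, j' ≫ i = j := by
          obtain ⟨j', hj'⟩ := KernelFork.IsLimit.lift' hse.exact.fIsKernel j hz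
          exact ⟨j', hj'⟩
        have : Mono j' := by
          haveI := hj
          rw [← hj'] at hj
          exact mono_of_mono j' i
        obtain ⟨M, hM, hiso⟩ := ih hL₀ j' this
        exact ⟨M, List.mem_cons_of_mem _ hM, hiso⟩
      · haveI : Mono (j ≫ p) := mono_of_nonzero_from_simple hz
        haveI : Epi (j ≫ p) := epi_of_nonzero_to_simple hz
        haveI : IsIso (j ≫ p) := isIso_of_mono_of_epi _
        exact ⟨_, List.mem_cons_self, ⟨(asIso (j ≫ p)).symm⟩⟩

/-- composition factors of a subobject are among those of the big object -/
theorem compFactors_sub {X : A} {l : List A} (h : CompFactors X l) :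
    ∀ {Y : A} (j : Y ⟶ X), Mono j → ∃ l', CompFactors Y l' ∧ ∀ M ∈ l', M ∈ l := by
  induction h with
  | nil hz =>
      intro W j hj
      haveI := hj
      exact ⟨[], CompFactors.nil (IsZero.of_mono j hz), by simp⟩
  | @cons X Y L l hL i p w hse h ih =>
      intro W j hj
      haveI := hj
      haveI := hL
      haveI := hse.mono_f
      haveI := hse.epi_g
      by_cases hz : j ≫ p = 0
      · obtain ⟨j', hj'⟩ : ∃ j' : W ⟶ Y, j' ≫ i = j := by
          obtain ⟨j', hj'⟩ := KernelFork.IsLimit.lift' hse.exact.fIsKernel j hz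
          exact ⟨j', hj'⟩
        have hmj' : Mono j' := by
          rw [← hj'] at hj
          exact mono_of_mono j' i
        obtain ⟨l', hl', hm⟩ := ih j' hmj'
        exact ⟨l', hl', fun M hM => List.mem_cons_of_mem _ (hm M hM)⟩
      · haveI hepi : Epi (j ≫ p) := epi_of_nonzero_to_simple hz
        have hcond : kernel.ι (j ≫ p) ≫ j ≫ p = 0 := kernel.condition _
        obtain ⟨m, hm⟩ : ∃ m : kernel (j ≫ p) ⟶ Y, m ≫ i = kernel.ι (j ≫ p) ≫ j := by
          obtain ⟨m, hm⟩ := KernelFork.IsLimit.lift' hse.exact.fIsKernel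
            (kernel.ι (j ≫ p) ≫ j) (by rw [Category.assoc]; exact hcond)
          exact ⟨m, hm⟩
        have hmm : Mono m := by
          have : Mono (m ≫ i) := by rw [hm]; exact mono_comp _ _
          exact mono_of_mono m i
        obtain ⟨l₀, hl₀, hmem⟩ := ih m hmm
        have hse' : (ShortComplex.mk (kernel.ι (j ≫ p)) (j ≫ p)
            (kernel.condition _)).ShortExact :=
          ShortComplex.ShortExact.mk' (ShortComplex.exact_kernel _) inferInstance hepi
        refine ⟨_ :: l₀, CompFactors.cons hL (kernel.ι (j ≫ p)) (j ≫ p)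
          (kernel.condition _) hse' hl₀, ?_⟩
        intro M hM
        rcases List.mem_cons.mp hM with h1 | h1
        · rw [h1]; exact List.mem_cons_self
        · exact List.mem_cons_of_mem _ (hmem M h1)

end StmtAux

/-- (inductive step of Proposition 2.6) Let `s` be the maximal
element of `S` with `Hom(M s, X) ≠ 0` for an object `X ∈ A_{⪯ s}`.  Let `X_s` be
the image of the evaluation map `Hom(M s, X) ⊗ M s → X` and `X' = X / X_s`.
Then `Hom(X', N r) ≅ Hom(X, N r)` (via composition with the quotient map) for
all `r ≠ s`, and `Hom(X', N s) = 0`. -/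
theorem stmt15 (k : Type*) [Field k] (A : Type u) [Category.{v} A] [Abelian A]
    [Linear k A]
    (hfl : ∀ X : A, ∃ l : List A, CompFactors X l)
    (hend : ∀ L : A, Simple L → ∀ f : L ⟶ L, ∃ c : k, f = c • 𝟙 L)
    {S : Type*} [LinearOrder S] (L : S → A)
    (hsimple : ∀ s : S, Simple (L s))
    (hdist : ∀ s t : S, Nonempty (L s ≅ L t) → s = t)
    (d : QHData L) (s : S) (X : A)
    (hX : InSub L s X)
    (hmax : ∀ t : S, (∃ f : d.M t ⟶ X, f ≠ 0) → t ≤ s)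
    (hne : ∃ f : d.M s ⟶ X, f ≠ 0)
    (n : ℕ) (b : Module.Basis (Fin n) k (d.M s ⟶ X))
    (e : (⨁ fun _ : Fin n => d.M s) ⟶ X)
    (he : e = biproduct.desc fun i : Fin n => b i) :
    (∀ g : cokernel (image.ι e) ⟶ d.N s, g = 0) ∧
    ∀ r : S, r ≠ s →
      Function.Bijective
        (fun g : cokernel (image.ι e) ⟶ d.N r => cokernel.π (image.ι e) ≫ g) := by
  classical
  haveI : Simple (L s) := hsimple s
  have hb : ∀ i : Fin n, b i = biproduct.ι (fun _ : Fin n => d.M s) i ≫ e := by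
    intro i; rw [he, biproduct.ι_desc]
  have heπ : ∀ {W : A} (g : cokernel (image.ι e) ⟶ W) (i : Fin n),
      b i ≫ cokernel.π (image.ι e) ≫ g = 0 := by
    intro W g i
    have h1 : image.ι e ≫ cokernel.π (image.ι e) ≫ g = 0 := by
      rw [← Category.assoc, cokernel.condition, zero_comp]
    have h2 : e ≫ cokernel.π (image.ι e) ≫ g =
        factorThruImage e ≫ image.ι e ≫ cokernel.π (image.ι e) ≫ g := by
      simp only [← Category.assoc]
      rw [image.fac]
    rw [hb i, Category.assoc, h2, h1, comp_zero, comp_zero]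
  constructor
  · -- Hom(X', N s) = 0
    intro g
    by_contra hg
    have hh : cokernel.π (image.ι e) ≫ g ≠ 0 := by
      intro h0
      exact hg ((cancel_epi (cokernel.π (image.ι e))).mp (by rw [h0, comp_zero]))
    obtain ⟨u, hu⟩ := socle_lemma (d.ψ s) (d.ψ_mono s) (d.ψ_ess s) _ hh
    obtain ⟨lN, hlN, hpropN⟩ := d.N_mem s
    obtain ⟨lI, hlI, hmemI⟩ := compFactors_sub hlN
      (image.ι (cokernel.π (image.ι e) ≫ g)) inferInstance
    have hInI : InSub L s (image (cokernel.π (image.ι e) ≫ g)) :=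
      ⟨lI, hlI, fun M hM => hpropN M (hmemI M hM)⟩
    obtain ⟨g', hg'⟩ := d.M_proj s X _ hX hInI
      (factorThruImage (cokernel.π (image.ι e) ≫ g)) inferInstance (d.φ s ≫ u)
    have hnz : g' ≫ cokernel.π (image.ι e) ≫ g ≠ 0 := by
      rw [← image.fac (cokernel.π (image.ι e) ≫ g), ← Category.assoc, hg',
        Category.assoc, hu]
      intro h0
      have hψ0 : d.ψ s = 0 := by
        haveI := d.φ_epi s
        rw [← cancel_epi (d.φ s), comp_zero]
        exact h0
      haveI := d.ψ_mono s
      exact Simple.not_isZero (L s) (IsZero.of_mono_eq_zero _ hψ0)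
    apply hnz
    conv_lhs => rw [← b.sum_repr g']
    rw [Preadditive.sum_comp]
    exact Finset.sum_eq_zero fun i _ => by rw [Linear.smul_comp, heπ g i, smul_zero]
  · -- Hom(X', N r) ≅ Hom(X, N r) for r ≠ s
    intro r hr
    constructor
    · intro g₁ g₂ hgg
      exact (cancel_epi (cokernel.π (image.ι e))).mp hgg
    · intro h
      haveI : Simple (L r) := hsimple r
      obtain ⟨lN, hlN, hpropN⟩ := d.N_mem r
      have hbih : ∀ i : Fin n, b i ≫ h = 0 := by
        intro i
        by_contra hf
        -- s ≤ r
        have hInz : ¬ IsZero (image (b i ≫ h)) := by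
          intro hz
          exact hf (by rw [← image.fac (b i ≫ h), hz.eq_zero_of_src (image.ι _),
            comp_zero])
        obtain ⟨v, hv, hvepi⟩ := top_lemma (d.φ s) (d.φ_epi s) (d.φ_ess s)
          (factorThruImage (b i ≫ h)) hInz
        obtain ⟨lI, hlI, hmemI⟩ := compFactors_sub hlN (image.ι (b i ≫ h))
          inferInstance
        obtain ⟨M, hM, ⟨eM⟩⟩ := exists_iso_of_epi hlI (hsimple s) v hvepi
        obtain ⟨t, htr, ⟨eMt⟩⟩ := hpropN M (hmemI M hM)
        have hsr : s ≤ r := by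
          have hst : s = t := hdist s t ⟨eM.symm ≪≫ eMt⟩
          exact hst ▸ htr
        -- r ≤ s
        have hh0 : h ≠ 0 := fun h0 => hf (by rw [h0, comp_zero])
        obtain ⟨u, hu⟩ := socle_lemma (d.ψ r) (d.ψ_mono r) (d.ψ_ess r) h hh0
        obtain ⟨lX, hlX, hpropX⟩ := hX
        have hXr : InSub L r X := ⟨lX, hlX, fun M hM => by
          obtain ⟨t', hts, e'⟩ := hpropX M hM
          exact ⟨t', le_trans hts hsr, e'⟩⟩
        obtain ⟨lJ, hlJ, hmemJ⟩ := compFactors_sub hlN (image.ι h) inferInstance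
        have hJr : InSub L r (image h) := ⟨lJ, hlJ, fun M hM => hpropN M (hmemJ M hM)⟩
        obtain ⟨g', hg'⟩ := d.M_proj r X (image h) hXr hJr (factorThruImage h)
          inferInstance (d.φ r ≫ u)
        have hg'nz : g' ≠ 0 := by
          intro h0
          rw [h0, zero_comp] at hg'
          have hu0 : u = 0 := by
            haveI := d.φ_epi r
            rw [← cancel_epi (d.φ r), comp_zero]
            exact hg'.symm
          have hψ0 : d.ψ r = 0 := by rw [← hu, hu0, zero_comp]
          haveI := d.ψ_mono r
          exact Simple.not_isZero (L r) (IsZero.of_mono_eq_zero _ hψ0)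
        exact hr (le_antisymm (hmax r ⟨g', hg'nz⟩) hsr)
      have heh : e ≫ h = 0 := by
        apply biproduct.hom_ext'
        intro i
        rw [comp_zero, ← Category.assoc, ← hb i, hbih i]
      have hιh : image.ι e ≫ h = 0 := by
        have hfac : factorThruImage e ≫ image.ι e ≫ h = factorThruImage e ≫ 0 := by
          rw [comp_zero, ← Category.assoc, image.fac, heh]
        exact (cancel_epi (factorThruImage e)).mp hfac
      exact ⟨cokernel.desc _ h hιh, cokernel.π_desc _ _ _⟩
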